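/- Let tau be a forcibly self-complementary degree sequence and let G be a realization of tau with l distinct vertex degrees. Then for every i = 1, ..., l, the i-th slice S_i of G is self-complementary, and the degree sequence of S_i is forcibly self-complementary. -/

import Mathlib

open SimpleGraph

/-- The degree of a vertex, as the cardinality of its neighbor set. -/
noncomputable def deg {V : Type*} (G : SimpleGraph V) (v : V) : ℕ := (G.neighborSet v).ncard

/-- The degree sequence of a finite graph, as a multiset (which determines the
non-increasing sequence of vertex degrees). -/
noncomputable def degMultiset {V : Type*} [Finite V] (G : SimpleGraph V) : Multiset ℕ :=
  letI := Fintype.ofFinite V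
  Finset.univ.val.map fun v => deg G v

/-- A graph is self-complementary if it is isomorphic to its complement. -/
def IsSelfCompl {V : Type*} (G : SimpleGraph V) : Prop := Nonempty (G ≃g Gᶜ)

/-- A degree sequence is forcibly self-complementary if every realization of it
is self-complementary. -/
def ForciblySC (τ : Multiset ℕ) : Prop :=
  ∀ G : SimpleGraph (Fin (Multiset.card τ)), degMultiset G = τ → IsSelfCompl G

/-! ### Auxiliary lemmas -/

/-- An isomorphism of graphs yields an isomorphism of the complements. -/
def isoCompl {V W : Type*} {G : SimpleGraph V} {H : SimpleGraph W} (e : G ≃g H) : Gᶜ ≃g Hᶜ :=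
  ⟨e.toEquiv, by
    intro a b
    simp [compl_adj, e.map_adj_iff, EmbeddingLike.apply_eq_iff_eq]⟩

lemma isSelfCompl_of_iso {V W : Type*} {G : SimpleGraph V} {H : SimpleGraph W}
    (e : G ≃g H) (h : IsSelfCompl H) : IsSelfCompl G := by
  obtain ⟨σ⟩ := h
  exact ⟨(e.trans σ).trans (isoCompl e).symm⟩

lemma deg_eq_of_iso {V W : Type*} {G : SimpleGraph V} {H : SimpleGraph W}
    (e : G ≃g H) (v : V) : deg H (e v) = deg G v := by
  unfold deg
  rw [← Nat.card_coe_set_eq, ← Nat.card_coe_set_eq]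
  exact Nat.card_congr (e.mapNeighborSet v).symm

lemma degMultiset_def {V : Type*} [inst : Fintype V] (G : SimpleGraph V) :
    degMultiset G = Finset.univ.val.map (deg G) := by
  unfold degMultiset
  rw [Subsingleton.elim (Fintype.ofFinite V) inst]

lemma degMultiset_eq_of_iso {V W : Type*} [Finite V] [Finite W] {G : SimpleGraph V}
    {H : SimpleGraph W} (e : G ≃g H) : degMultiset G = degMultiset H := by
  letI := Fintype.ofFinite V
  letI := Fintype.ofFinite W
  rw [degMultiset_def, degMultiset_def]
  have : (Finset.univ : Finset W) = Finset.univ.map e.toEquiv.toEmbedding := by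
    simp
  rw [this, Finset.map_val, Multiset.map_map]
  congr 1
  funext v
  exact (deg_eq_of_iso e v).symm

lemma deg_eq_degree {V : Type*} [Fintype V] (G : SimpleGraph V) [DecidableRel G.Adj] (v : V) :
    deg G v = G.degree v := by
  rw [deg, degree, ← Set.ncard_coe_finset (G.neighborFinset v), neighborFinset_def,
    Set.coe_toFinset]

lemma card_degMultiset {V : Type*} [Finite V] (G : SimpleGraph V) :
    Multiset.card (degMultiset G) = Nat.card V := by
  letI := Fintype.ofFinite V
  rw [degMultiset_def]
  simp [Nat.card_eq_fintype_card]

lemma deg_compl {V : Type*} [Finite V] (G : SimpleGraph V) (v : V) :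
    deg Gᶜ v = Nat.card V - 1 - deg G v := by
  letI := Fintype.ofFinite V
  classical
  rw [deg_eq_degree, deg_eq_degree, degree_compl, Nat.card_eq_fintype_card]

lemma deg_le {V : Type*} [Finite V] (G : SimpleGraph V) (v : V) :
    deg G v ≤ Nat.card V - 1 := by
  letI := Fintype.ofFinite V
  classical
  rw [deg_eq_degree, Nat.card_eq_fintype_card]
  have := G.degree_lt_card_verts v
  omega

/-- A forcibly self-complementary sequence forces any of its realizations, on any
finite vertex type, to be self-complementary. -/
lemma forciblySC_apply {τ : Multiset ℕ} (hforc : ForciblySC τ) {V : Type*} [Finite V]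
    (G : SimpleGraph V) (hG : degMultiset G = τ) : IsSelfCompl G := by
  have hcard : Nat.card V = Multiset.card τ := by rw [← hG, card_degMultiset]
  have e : V ≃ Fin (Multiset.card τ) := by
    have := Fintype.ofFinite V
    exact this.equivFinOfCardEq (by rw [← Nat.card_eq_fintype_card, hcard])
  let G' : SimpleGraph (Fin (Multiset.card τ)) :=
    { Adj := fun a b => G.Adj (e.symm a) (e.symm b)
      symm := ⟨fun a b h => G.adj_symm h⟩
      loopless := ⟨fun a h => G.irrefl h⟩ }
  have iso : G ≃g G' := ⟨e, by intro a b; simp [G']⟩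
  have : degMultiset G' = τ := by rw [← degMultiset_eq_of_iso iso, hG]
  exact isSelfCompl_of_iso iso (hforc G' this)

lemma finStrictMono_id {l : ℕ} {f : Fin l → Fin l} (hf : StrictMono f) : f = id := by
  haveI : WellFoundedLT (Fin l) := inferInstance
  have hsurj : Function.Surjective f := Finite.injective_iff_surjective.mp hf.injective
  exact (StrictMono.range_inj (f := f) (g := id) hf strictMono_id).1
    (by rw [Set.range_id, Set.range_eq_univ.2 hsurj])

/-- In a self-complementary graph with distinct degrees `d 0 > ... > d (l-1)`, we have
`d j + d j.rev = n - 1`. -/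
lemma d_add_d_rev {V : Type*} [Finite V] (G : SimpleGraph V)
    (l : ℕ) (d : Fin l → ℕ) (hd : StrictAnti d)
    (hdeg : ∀ v, ∃ i, deg G v = d i) (hattain : ∀ i, ∃ v, deg G v = d i)
    (σ : G ≃g Gᶜ) (j : Fin l) : d j.rev = Nat.card V - 1 - d j := by
  set n := Nat.card V with hn
  have hmap : ∀ v, deg G (σ v) = n - 1 - deg G v := by
    intro v
    have h1 : deg Gᶜ (σ v) = deg G v := deg_eq_of_iso σ v
    have h2 := deg_compl G (σ v)
    have h3 := deg_le G (σ v)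
    omega
  have hdle : ∀ k : Fin l, d k ≤ n - 1 := by
    intro k
    obtain ⟨v, hv⟩ := hattain k
    rw [← hv]; exact deg_le G v
  choose g hg using fun k : Fin l => hdeg (σ (hattain k).choose)
  have hgd : ∀ k, d (g k) = n - 1 - d k := by
    intro k
    rw [← hg k, hmap, (hattain k).choose_spec]
  have hanti : StrictAnti g := by
    intro a b hab
    rw [← hd.lt_iff_gt, hgd, hgd]
    have h1 : d b < d a := hd hab
    have h2 := hdle a
    omega
  have hrev : StrictMono (fun k => (g k).rev) := by
    intro a b hab
    simp only [Fin.rev_lt_rev]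
    exact hanti hab
  have := finStrictMono_id hrev
  have hj : (g j).rev = j := congrFun this j
  have hjg : g j = j.rev := by rw [← Fin.rev_rev (g j), hj]
  rw [← hjg, hgd]

/-- The slice of a self-complementary graph is self-complementary. -/
lemma slice_sc {V : Type*} [Finite V] (G : SimpleGraph V)
    (l : ℕ) (d : Fin l → ℕ) (hd : StrictAnti d)
    (hdeg : ∀ v, ∃ i, deg G v = d i) (hattain : ∀ i, ∃ v, deg G v = d i)
    (σ : G ≃g Gᶜ) (i : Fin l) :
    IsSelfCompl (G.induce ({v | deg G v = d i} ∪ {v | deg G v = d i.rev})) := by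
  set n := Nat.card V with hn
  have hκ := d_add_d_rev G l d hd hdeg hattain σ
  have hmap : ∀ v, deg G (σ v) = n - 1 - deg G v := by
    intro v
    have h1 : deg Gᶜ (σ v) = deg G v := deg_eq_of_iso σ v
    have h2 := deg_compl G (σ v)
    have h3 := deg_le G (σ v)
    omega
  set S : Set V := {v | deg G v = d i} ∪ {v | deg G v = d i.rev} with hS
  have hmt : Set.MapsTo σ S S := by
    rintro v (hv | hv)
    · right
      show deg G (σ v) = d i.rev
      rw [hmap, Set.mem_setOf_eq.mp hv, hκ i]
    · left
      show deg G (σ v) = d i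
      have h2 : d i.rev.rev = n - 1 - d i.rev := hκ i.rev
      rw [Fin.rev_rev] at h2
      rw [hmap, Set.mem_setOf_eq.mp hv, ← h2]
  have hbij : Set.BijOn σ S S :=
    (Set.Finite.injOn_iff_bijOn_of_mapsTo S.toFinite hmt).mp (σ.injective.injOn)
  refine ⟨⟨hbij.equiv σ, ?_⟩⟩
  intro a b
  show (G.induce S)ᶜ.Adj _ _ ↔ G.Adj ↑a ↑b
  have hea : ∀ x : S, ((hbij.equiv σ) x : V) = σ (x : V) := fun x => rfl
  rw [compl_adj]
  simp only [comap_adj, Function.Embedding.coe_subtype, hea]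
  constructor
  · rintro ⟨hne, hnadj⟩
    have hab : (a : V) ≠ (b : V) := by
      intro h
      exact hne (congrArg _ (Subtype.ext h))
    have hσ : σ ↑a ≠ σ ↑b := fun h => hab (σ.injective h)
    have : Gᶜ.Adj (σ ↑a) (σ ↑b) := (compl_adj G _ _).mpr ⟨hσ, hnadj⟩
    exact σ.map_adj_iff.mp this
  · intro hadj
    have : Gᶜ.Adj (σ ↑a) (σ ↑b) := σ.map_adj_iff.mpr hadj
    rw [compl_adj] at this
    refine ⟨fun h => this.1 ?_, this.2⟩
    have := congrArg (Subtype.val) h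
    simpa [hea] using this

lemma exists_matching_equiv {A B : Type*} [Fintype A] [Fintype B] (f : A → ℕ) (g : B → ℕ)
    (h : Finset.univ.val.map f = Finset.univ.val.map g) :
    ∃ e : A ≃ B, ∀ a, g (e a) = f a := by
  classical
  have hcard : ∀ c : ℕ, Fintype.card {a : A // f a = c} = Fintype.card {b : B // g b = c} := by
    intro c
    have h1 : Fintype.card {a : A // f a = c} = Multiset.count c (Finset.univ.val.map f) := by
      rw [Multiset.count_map, Fintype.card_subtype]
      simp [Finset.filter, eq_comm]
    have h2 : Fintype.card {b : B // g b = c} = Multiset.count c (Finset.univ.val.map g) := by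
      rw [Multiset.count_map, Fintype.card_subtype]
      simp [Finset.filter, eq_comm]
    rw [h1, h2, h]
  exact ⟨Equiv.ofFiberEquiv (f := f) (g := g) (fun c => Fintype.equivOfCardEq (hcard c)),
    fun a => Equiv.ofFiberEquiv_map (fun c => Fintype.equivOfCardEq (hcard c)) a⟩

lemma deg_induce {V : Type*} (G : SimpleGraph V) (S : Set V) (v : S) :
    deg (G.induce S) v = (G.neighborSet ↑v ∩ S).ncard := by
  unfold deg
  have h1 : (G.induce S).neighborSet v = (Subtype.val ⁻¹' (G.neighborSet ↑v) : Set S) := by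
    ext w
    simp [neighborSet]
  rw [h1, ← Set.ncard_image_of_injective _ Subtype.val_injective,
    Subtype.image_preimage_coe]
  rw [Set.inter_comm]

set_option linter.unreachableTactic false in
set_option linter.unusedTactic false in
open scoped Classical in
/-- Replace the induced subgraph on `S` by a graph `H` with matching degrees. -/
lemma replace_slice {V : Type*} [Finite V] (G : SimpleGraph V) (S : Set V)
    {W : Type*} (H : SimpleGraph W) (φ : S ≃ W)
    (hφ : ∀ v : S, deg H (φ v) = deg (G.induce S) v) :
    ∃ G' : SimpleGraph V, (∀ v, deg G' v = deg G v) ∧ Nonempty (G'.induce S ≃g H) := by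
  set G' : SimpleGraph V :=
    { Adj := fun v w => if h : v ∈ S ∧ w ∈ S then H.Adj (φ ⟨v, h.1⟩) (φ ⟨w, h.2⟩) else G.Adj v w
      symm := by
        constructor
        intro v w h
        by_cases hv : v ∈ S <;> by_cases hw : w ∈ S <;>
          simp only [hv, hw, and_self, true_and, and_true, and_false, false_and,
            dif_pos, dif_neg, not_false_eq_true, dite_true, dite_false] at h ⊢ <;>
          first
            | exact H.adj_symm h
            | exact G.adj_symm h
            | (rw [dif_neg (by tauto)] at h ⊢; exact G.adj_symm h)
      loopless := by
        constructor
        intro v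
        by_cases hv : v ∈ S
        · simp only [hv, and_self, dif_pos]
          exact H.irrefl
        · rw [dif_neg (by tauto)]
          exact G.irrefl } with hG'
  have hadj_in : ∀ (v w : V) (hv : v ∈ S) (hw : w ∈ S),
      (G'.Adj v w ↔ H.Adj (φ ⟨v, hv⟩) (φ ⟨w, hw⟩)) := by
    intro v w hv hw
    show (if h : v ∈ S ∧ w ∈ S then _ else _) ↔ _
    rw [dif_pos ⟨hv, hw⟩]
  have hadj_out : ∀ (v w : V), w ∉ S → (G'.Adj v w ↔ G.Adj v w) := by
    intro v w hw
    show (if h : v ∈ S ∧ w ∈ S then _ else _) ↔ _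
    rw [dif_neg (by tauto)]
  refine ⟨G', ?_, ⟨⟨φ.symm.symm, ?_⟩⟩⟩
  · intro v
    by_cases hv : v ∈ S
    · have hdiff : G'.neighborSet v \ S = G.neighborSet v \ S := by
        ext w
        simp only [Set.mem_diff, SimpleGraph.mem_neighborSet]
        exact and_congr_left fun hw => hadj_out v w hw
      have hinter : G'.neighborSet v ∩ S =
          (fun w : W => (φ.symm w : V)) '' (H.neighborSet (φ ⟨v, hv⟩)) := by
        ext x
        simp only [Set.mem_inter_iff, SimpleGraph.mem_neighborSet, Set.mem_image]
        constructor
        · rintro ⟨hadj, hx⟩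
          refine ⟨φ ⟨x, hx⟩, ?_, by simp⟩
          exact (hadj_in v x hv hx).mp hadj
        · rintro ⟨w, hw, rfl⟩
          refine ⟨?_, (φ.symm w).2⟩
          refine (hadj_in v _ hv (φ.symm w).2).mpr ?_
          rw [show (⟨↑(φ.symm w), (φ.symm w).2⟩ : S) = φ.symm w from rfl,
            φ.apply_symm_apply]
          exact hw
      have h1 : (G'.neighborSet v ∩ S).ncard = (G.neighborSet v ∩ S).ncard := by
        rw [hinter, Set.ncard_image_of_injective _
          (show Function.Injective fun w : W => (↑(φ.symm w) : V) from
            fun a b h => (Equiv.injective _) (Subtype.val_injective h)),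
          ← deg_induce G S ⟨v, hv⟩, ← hφ]
        rfl
      have e1 := Set.ncard_inter_add_ncard_diff_eq_ncard (G'.neighborSet v) S (Set.toFinite _)
      have e2 := Set.ncard_inter_add_ncard_diff_eq_ncard (G.neighborSet v) S (Set.toFinite _)
      show (G'.neighborSet v).ncard = (G.neighborSet v).ncard
      rw [← e1, ← e2, h1, hdiff]
    · have : G'.neighborSet v = G.neighborSet v := by
        ext w
        show G'.Adj v w ↔ G.Adj v w
        show (if h : v ∈ S ∧ w ∈ S then _ else _) ↔ _
        rw [dif_neg (by tauto)]
      unfold deg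
      rw [this]
  · intro a b
    show H.Adj (φ a) (φ b) ↔ (G'.induce S).Adj a b
    show H.Adj (φ a) (φ b) ↔ G'.Adj ↑a ↑b
    rw [hadj_in ↑a ↑b a.2 b.2]

theorem slice_forciblySC {V : Type*} [Finite V] (G : SimpleGraph V)
    (l : ℕ) (d : Fin l → ℕ) (hd : StrictAnti d)
    (hdeg : ∀ v, ∃ i, deg G v = d i) (hattain : ∀ i, ∃ v, deg G v = d i)
    (hforc : ForciblySC (degMultiset G)) (i : Fin l) :
    IsSelfCompl (G.induce ({v | deg G v = d i} ∪ {v | deg G v = d i.rev})) ∧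
    ForciblySC (degMultiset
      (G.induce ({v | deg G v = d i} ∪ {v | deg G v = d i.rev}))) := by
  obtain ⟨σ⟩ : IsSelfCompl G := forciblySC_apply hforc G rfl
  set S : Set V := {v | deg G v = d i} ∪ {v | deg G v = d i.rev} with hS
  refine ⟨slice_sc G l d hd hdeg hattain σ i, ?_⟩
  intro H hH
  letI : Fintype V := Fintype.ofFinite V
  letI : Fintype S := Fintype.ofFinite S
  -- a degree-matching bijection between the slice and the vertices of H
  have hmult : Finset.univ.val.map (deg (G.induce S)) = Finset.univ.val.map (deg H) := by
    rw [← degMultiset_def, ← degMultiset_def, hH]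
  obtain ⟨φ, hφ⟩ := exists_matching_equiv (deg (G.induce S)) (deg H) hmult
  obtain ⟨G', hdegG', ⟨ι⟩⟩ := replace_slice G S H φ hφ
  -- G' has the same degree sequence as G
  have hmult' : degMultiset G' = degMultiset G := by
    rw [degMultiset_def, degMultiset_def]
    congr 1
    funext v
    exact hdegG' v
  obtain ⟨σ'⟩ : IsSelfCompl G' := forciblySC_apply hforc G' hmult'
  have hdeg' : ∀ v, ∃ j, deg G' v = d j := fun v => by rw [hdegG']; exact hdeg v
  have hattain' : ∀ j, ∃ v, deg G' v = d j := fun j => by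
    obtain ⟨v, hv⟩ := hattain j
    exact ⟨v, by rw [hdegG']; exact hv⟩
  have hSeq : ({v | deg G' v = d i} ∪ {v | deg G' v = d i.rev}) = S := by
    rw [hS]
    ext v
    simp only [Set.mem_union, Set.mem_setOf_eq, hdegG']
  have hsc' := slice_sc G' l d hd hdeg' hattain' σ' i
  rw [hSeq] at hsc'
  exact isSelfCompl_of_iso ι.symm hsc'
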